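/- Let G be the reflection group generated by a set of hyperplanes of the form (i,j;x), with factor set F(G) = {λ_i − q^{−2x}λ_j : (i,j;x) a simple reflection of G}. Two walks w, w' are in the same walk orbit of G if and only if every non-zero entry of λ^w − λ^{w'} is divisible by an element of F(G). -/

import Mathlib

/- STATEMENT 15: two walks are in the same walk orbit of the reflection group
generated by a set of hyperplanes iff every non-zero entry of λ^w - λ^{w'} is
divisible by an element of the factor set. -/

noncomputable section

open MvPolynomial

/-- The ring ℤ[q,q⁻¹][λ_1,...,λ_d]. -/
abbrev WalkRing (d : ℕ) : Type := MvPolynomial (Fin d) (LaurentPolynomial ℤ)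

/-- `wcount w l i` = #_l(i), the number of the first `l` steps equal to `i`. -/
def wcount {n d : ℕ} (w : Fin n → Fin d) (l : ℕ) (i : Fin d) : ℕ :=
  (Finset.univ.filter (fun s : Fin n => (s : ℕ) < l ∧ w s = i)).card

/-- The sequence λ^w: `(λ^w)_t = λ_{w_t} q^{2(#_t(w_t) - 1)}`. -/
def lamWalk {n d : ℕ} (w : Fin n → Fin d) (t : Fin n) : WalkRing d :=
  MvPolynomial.C (LaurentPolynomial.T (2 * ((wcount w ((t : ℕ) + 1) (w t) : ℤ) - 1))) * X (w t)

/-- The set of (simple) reflection hyperplanes of the reflection group generated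
by the hyperplanes in `S`: closed under inversion `(i,j;x) ↦ (j,i;-x)` and
composition `(i,j;x)∘(j,k;y) = (i,k;x+y)`. -/
inductive HypCl {d : ℕ} (S : Set (Fin d × Fin d × ℤ)) : Fin d → Fin d → ℤ → Prop where
  | base {i j : Fin d} {x : ℤ} : (i, j, x) ∈ S → HypCl S i j x
  | symm {i j : Fin d} {x : ℤ} : HypCl S i j x → HypCl S j i (-x)
  | comp {i j k : Fin d} {x y : ℤ} :
      HypCl S i j x → HypCl S j k y → HypCl S i k (x + y)

/-- One-step relation: `w'` is obtained from `w` by a reflection in a hyperplane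
of the group generated by `S`, at a touching step. -/
def stepRefl {n d : ℕ} (S : Set (Fin d × Fin d × ℤ)) (w w' : Fin n → Fin d) : Prop :=
  ∃ (i j : Fin d) (x : ℤ) (l : ℕ),
    HypCl S i j x ∧
    (wcount w l i : ℤ) - (wcount w l j : ℤ) = x ∧
    ∀ t : Fin n, w' t = if l ≤ (t : ℕ) then Equiv.swap i j (w t) else w t

namespace W15

open LaurentPolynomial

variable {n d : ℕ}

/-! ### Counting lemmas -/

lemma wcount_eq_sum (w : Fin n → Fin d) (l : ℕ) (i : Fin d) :
    wcount w l i = ∑ s : Fin n, if (s : ℕ) < l ∧ w s = i then 1 else 0 := by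
  rw [wcount, Finset.card_filter]

lemma wcount_congr {w v : Fin n → Fin d} (m : ℕ) (h : ∀ s : Fin n, (s : ℕ) < m → w s = v s)
    (a : Fin d) : wcount w m a = wcount v m a := by
  rw [wcount_eq_sum, wcount_eq_sum]
  refine Finset.sum_congr rfl fun s _ => ?_
  by_cases hs : (s : ℕ) < m
  · rw [h s hs]
  · simp [hs]

lemma wcount_succ (w : Fin n → Fin d) (m : ℕ) (hm : m < n) (i : Fin d) :
    wcount w (m + 1) i = wcount w m i + (if w ⟨m, hm⟩ = i then 1 else 0) := by
  rw [wcount_eq_sum, wcount_eq_sum]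
  have : ∀ s : Fin n, (if (s : ℕ) < m + 1 ∧ w s = i then 1 else 0)
      = (if (s : ℕ) < m ∧ w s = i then 1 else 0)
        + (if s = ⟨m, hm⟩ then (if w s = i then 1 else 0) else 0) := by
    intro s
    by_cases he : s = ⟨m, hm⟩
    · rw [he]
      by_cases hw : w ⟨m, hm⟩ = i <;> simp [hw]
    · have hne : (s : ℕ) ≠ m := fun hc => he (Fin.ext hc)
      by_cases h1 : (s : ℕ) < m
      · have : (s : ℕ) < m + 1 := by omega
        by_cases hw : w s = i <;> simp [*]
      · have : ¬ ((s : ℕ) < m + 1) := by omega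
        simp [*]
  rw [Finset.sum_congr rfl (fun s _ => this s), Finset.sum_add_distrib,
    Finset.sum_ite_eq' Finset.univ ⟨m, hm⟩ (fun s => if w s = i then 1 else 0)]
  simp

lemma wcount_split (w : Fin n → Fin d) {l m : ℕ} (h : l ≤ m) (a : Fin d) :
    wcount w m a = wcount w l a
      + ∑ s : Fin n, if l ≤ (s : ℕ) ∧ (s : ℕ) < m ∧ w s = a then 1 else 0 := by
  rw [wcount_eq_sum, wcount_eq_sum, ← Finset.sum_add_distrib]
  refine Finset.sum_congr rfl fun s _ => ?_
  by_cases hw : w s = a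
  · simp only [hw, and_true]
    split_ifs <;> omega
  · simp [hw]

/-! ### The entry-wise relation -/

/-- The exponent of `q` in the `t`-th entry of `λ^w`. -/
def cexp (w : Fin n → Fin d) (t : Fin n) : ℤ :=
  2 * ((wcount w ((t : ℕ) + 1) (w t) : ℤ) - 1)

lemma lamWalk_eq (w : Fin n → Fin d) (t : Fin n) :
    lamWalk w t = MvPolynomial.C (T (cexp w t)) * X (w t) := rfl

/-- Entry-wise relation between two walks capturing membership in the same orbit. -/
def ERel (S : Set (Fin d × Fin d × ℤ)) (w w' : Fin n → Fin d) (t : Fin n) : Prop :=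
  (w t = w' t ∧ cexp w t = cexp w' t) ∨
  ∃ x : ℤ, HypCl S (w t) (w' t) x ∧ cexp w t - cexp w' t = 2 * x

lemma ERel.refl (S : Set (Fin d × Fin d × ℤ)) (w : Fin n → Fin d) (t : Fin n) :
    ERel S w w t := Or.inl ⟨rfl, rfl⟩

lemma ERel.symm' {S : Set (Fin d × Fin d × ℤ)} {w w' : Fin n → Fin d} {t : Fin n}
    (h : ERel S w w' t) : ERel S w' w t := by
  rcases h with ⟨h1, h2⟩ | ⟨x, hx, he⟩
  · exact Or.inl ⟨h1.symm, h2.symm⟩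
  · exact Or.inr ⟨-x, hx.symm, by omega⟩

lemma ERel.trans' {S : Set (Fin d × Fin d × ℤ)} {w w' w'' : Fin n → Fin d} {t : Fin n}
    (h : ERel S w w' t) (h' : ERel S w' w'' t) : ERel S w w'' t := by
  rcases h with ⟨h1, h2⟩ | ⟨x, hx, he⟩
  · rcases h' with ⟨h1', h2'⟩ | ⟨x', hx', he'⟩
    · exact Or.inl ⟨h1.trans h1', h2.trans h2'⟩
    · exact Or.inr ⟨x', by rw [h1]; exact hx', by omega⟩
  · rcases h' with ⟨h1', h2'⟩ | ⟨x', hx', he'⟩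
    · exact Or.inr ⟨x, by rw [← h1']; exact hx, by omega⟩
    · exact Or.inr ⟨x + x', hx.comp hx', by omega⟩

/-- The key single-step lemma: reflecting a walk gives entry-wise related walks. -/
lemma stepRefl_ERel {S : Set (Fin d × Fin d × ℤ)} {w w' : Fin n → Fin d}
    (h : stepRefl S w w') (t : Fin n) : ERel S w w' t := by
  obtain ⟨i, j, x, l, hH, htouch, hw'⟩ := h
  by_cases hij : i = j
  · have hwe : w' = w := by
      funext s
      rw [hw' s, hij, Equiv.swap_self]
      split <;> rfl
    rw [hwe]; exact ERel.refl S w t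
  by_cases hlt : (t : ℕ) < l
  · have hagree : ∀ s : Fin n, (s : ℕ) < (t : ℕ) + 1 → w' s = w s := by
      intro s hs
      rw [hw' s, if_neg (by omega)]
    refine Or.inl ⟨(hagree t (by omega)).symm, ?_⟩
    unfold cexp
    rw [wcount_congr ((t : ℕ) + 1) hagree, hagree t (by omega)]
  push_neg at hlt
  have key : ∀ a : Fin d, (wcount w' ((t : ℕ) + 1) a : ℤ)
      = (wcount w l a : ℤ) + (wcount w ((t : ℕ) + 1) (Equiv.swap i j a) : ℤ)
        - (wcount w l (Equiv.swap i j a) : ℤ) := by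
    intro a
    have h1 : wcount w' ((t : ℕ) + 1) a = wcount w' l a
        + ∑ s : Fin n, if l ≤ (s : ℕ) ∧ (s : ℕ) < (t : ℕ) + 1 ∧ w' s = a then 1 else 0 :=
      wcount_split w' (by omega) a
    have h2 : wcount w ((t : ℕ) + 1) (Equiv.swap i j a) = wcount w l (Equiv.swap i j a)
        + ∑ s : Fin n, if l ≤ (s : ℕ) ∧ (s : ℕ) < (t : ℕ) + 1 ∧ w s = Equiv.swap i j a then 1 else 0 :=
      wcount_split w (by omega) (Equiv.swap i j a)
    have h3 : wcount w' l a = wcount w l a :=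
      wcount_congr l (fun s hs => by rw [hw' s, if_neg (by omega)]) a
    have h4 : ∀ s : Fin n, l ≤ (s : ℕ) → (w' s = a ↔ w s = Equiv.swap i j a) := by
      intro s hs
      rw [hw' s, if_pos hs]
      constructor
      · intro hh; rw [← hh, Equiv.swap_apply_self]
      · intro hh; rw [hh, Equiv.swap_apply_self]
    have h5 : (∑ s : Fin n, if l ≤ (s : ℕ) ∧ (s : ℕ) < (t : ℕ) + 1 ∧ w' s = a then 1 else 0)
        = ∑ s : Fin n, if l ≤ (s : ℕ) ∧ (s : ℕ) < (t : ℕ) + 1 ∧ w s = Equiv.swap i j a then 1 else 0 := by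
      refine Finset.sum_congr rfl fun s _ => ?_
      by_cases hls : l ≤ (s : ℕ)
      · simp only [hls, true_and, h4 s hls]
      · simp [hls]
    rw [h5, h3] at h1
    omega
  have hwt' : w' t = Equiv.swap i j (w t) := by rw [hw' t, if_pos hlt]
  by_cases hi : w t = i
  · have hj : w' t = j := by rw [hwt', hi, Equiv.swap_apply_left]
    refine Or.inr ⟨x, by rw [hi, hj]; exact hH, ?_⟩
    have := key j
    rw [Equiv.swap_apply_right] at this
    unfold cexp
    rw [hj, hi] at *
    omega
  by_cases hjj : w t = j
  · have hi' : w' t = i := by rw [hwt', hjj, Equiv.swap_apply_right]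
    refine Or.inr ⟨-x, by rw [hjj, hi']; exact hH.symm, ?_⟩
    have := key i
    rw [Equiv.swap_apply_left] at this
    unfold cexp
    rw [hi', hjj] at *
    omega
  · have hfix : Equiv.swap i j (w t) = w t := Equiv.swap_apply_of_ne_of_ne hi hjj
    have hwt : w' t = w t := by rw [hwt', hfix]
    refine Or.inl ⟨hwt.symm, ?_⟩
    have := key (w t)
    rw [hfix] at this
    unfold cexp
    rw [hwt] at *
    omega

/-! ### Algebraic lemmas -/

lemma T_ne_zero' (c : ℤ) : (T c : LaurentPolynomial ℤ) ≠ 0 := (isUnit_T c).ne_zero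

lemma T_inj' {c c' : ℤ} (h : (T c : LaurentPolynomial ℤ) = T c') : c = c' := by
  by_contra hne
  have h2 := congrArg (fun f => f.coeff c) h
  simp only [T_apply, if_pos rfl, if_neg (Ne.symm hne)] at h2
  exact one_ne_zero h2

lemma CX_eq_CX {r s : LaurentPolynomial ℤ} {u v : Fin d} (hr : r ≠ 0)
    (h : (MvPolynomial.C r * X u : WalkRing d) = MvPolynomial.C s * X v) : u = v ∧ r = s := by
  rw [MvPolynomial.C_mul_X_eq_monomial, MvPolynomial.C_mul_X_eq_monomial,
    MvPolynomial.monomial_eq_monomial_iff] at h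
  rcases h with ⟨h1, h2⟩ | ⟨h1, h2⟩
  · exact ⟨Finsupp.single_left_injective (one_ne_zero) h1, h2⟩
  · exact absurd h1 hr

lemma CX_ne_zero {r : LaurentPolynomial ℤ} {u : Fin d} (hr : r ≠ 0) :
    (MvPolynomial.C r * X u : WalkRing d) ≠ 0 := by
  rw [MvPolynomial.C_mul_X_eq_monomial]
  exact fun h => hr (by simpa using (MvPolynomial.monomial_eq_zero).mp h)

lemma T_sub_dvd {e c c' : ℤ}
    (h : (1 - T e : LaurentPolynomial ℤ) ∣ (T c - T c')) : e ∣ c - c' := by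
  obtain ⟨g, hg⟩ := h
  set m := e.natAbs with hm
  let φ : LaurentPolynomial ℤ →+* AddMonoidAlgebra ℤ (ZMod m) :=
    AddMonoidAlgebra.mapDomainRingHom ℤ (Int.castAddHom (ZMod m))
  have hφT : ∀ a : ℤ, φ (T a) = AddMonoidAlgebra.single ((a : ZMod m)) (1 : ℤ) := by
    intro a
    show AddMonoidAlgebra.mapDomain _ (AddMonoidAlgebra.single a 1) = _
    rw [AddMonoidAlgebra.mapDomain_single]
    rfl
  have he0 : ((e : ZMod m)) = 0 := by
    rw [ZMod.intCast_zmod_eq_zero_iff_dvd]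
    exact Int.natAbs_dvd.mpr dvd_rfl
  have hz : φ (1 - T e) = 0 := by
    rw [map_sub, map_one, hφT, he0]
    rw [show ((1 : AddMonoidAlgebra ℤ (ZMod m))) = AddMonoidAlgebra.single 0 1 from rfl]
    rw [sub_self]
  have h0 : φ (T c - T c') = 0 := by rw [hg, map_mul, hz, zero_mul]
  rw [map_sub, hφT, hφT, sub_eq_zero] at h0
  have hcc : ((c : ZMod m)) = (c' : ZMod m) :=
    AddMonoidAlgebra.single_left_injective (one_ne_zero) h0
  have hmod := (ZMod.intCast_eq_intCast_iff _ _ _).mp hcc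
  have hdvd2 : (m : ℤ) ∣ c - c' := Int.ModEq.dvd hmod.symm
  exact Int.natAbs_dvd.mp hdvd2

/-- Substitution of `p` for `X i`. -/
def subX (i : Fin d) (p : WalkRing d) : WalkRing d →ₐ[LaurentPolynomial ℤ] WalkRing d :=
  MvPolynomial.aeval (fun k : Fin d => if k = i then p else X k)

lemma subX_X_self (i : Fin d) (p : WalkRing d) : subX i p (X i) = p := by
  simp [subX]

lemma subX_X_ne (i : Fin d) (p : WalkRing d) {u : Fin d} (h : u ≠ i) :
    subX i p (X u) = X u := by
  simp [subX, h]

lemma subX_C (i : Fin d) (p : WalkRing d) (r : LaurentPolynomial ℤ) :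
    subX i p (MvPolynomial.C r) = MvPolynomial.C r := by
  simp [subX, MvPolynomial.algebraMap_eq]

/-- The main extraction: divisibility of a difference of two `λ`-type monomials by a
factor `X i - T e X j` forces matching of the variables and exponents. -/
lemma extract {a b i j : Fin d} {c c' x : ℤ} (hij : i ≠ j)
    (hdvd : (X i - MvPolynomial.C (T (-2 * x)) * X j)
      ∣ ((MvPolynomial.C (T c) * X a - MvPolynomial.C (T c') * X b : WalkRing d))) :
    (a = b ∧ c = c') ∨
    (a = i ∧ b = j ∧ c - c' = 2 * x) ∨ (a = j ∧ b = i ∧ c - c' = -(2 * x)) := by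
  obtain ⟨g, hg⟩ := hdvd
  set e : ℤ := -2 * x with he
  have hφfac : subX i (MvPolynomial.C (T e) * X j) (X i - MvPolynomial.C (T e) * X j) = 0 := by
    rw [map_sub, map_mul, subX_X_self, subX_C, subX_X_ne i _ (Ne.symm hij), sub_self]
  have h0 : subX i (MvPolynomial.C (T e) * X j)
      (MvPolynomial.C (T c) * X a - MvPolynomial.C (T c') * X b) = 0 := by
    rw [hg, map_mul, hφfac, zero_mul]
  rw [map_sub, map_mul, map_mul, subX_C, subX_C] at h0
  by_cases ha : a = i <;> by_cases hb : b = i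
  · rw [ha, hb, subX_X_self] at h0
    have : (MvPolynomial.C (T c) * (MvPolynomial.C (T e) * X j) : WalkRing d)
        = MvPolynomial.C (T c') * (MvPolynomial.C (T e) * X j) := sub_eq_zero.mp h0
    rw [← mul_assoc, ← mul_assoc, ← map_mul, ← map_mul] at this
    have h2 := (CX_eq_CX (by rw [← T_add]; exact T_ne_zero' _) this).2
    have h3 : T (c + e) = (T (c' + e) : LaurentPolynomial ℤ) := by rw [T_add, T_add]; exact h2
    have h4 := T_inj' h3
    exact Or.inl ⟨ha.trans hb.symm, by omega⟩
  · rw [ha, subX_X_self, subX_X_ne i _ hb] at h0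
    have : (MvPolynomial.C (T c) * (MvPolynomial.C (T e) * X j) : WalkRing d)
        = MvPolynomial.C (T c') * X b := sub_eq_zero.mp h0
    rw [← mul_assoc, ← map_mul, ← T_add] at this
    have h2 := CX_eq_CX (T_ne_zero' _) this
    have h3 := T_inj' h2.2
    exact Or.inr (Or.inl ⟨ha, h2.1.symm, by omega⟩)
  · rw [hb, subX_X_self, subX_X_ne i _ ha] at h0
    have : (MvPolynomial.C (T c) * X a : WalkRing d)
        = MvPolynomial.C (T c') * (MvPolynomial.C (T e) * X j) := sub_eq_zero.mp h0
    rw [← mul_assoc, ← map_mul, ← T_add] at this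
    have h2 := CX_eq_CX (T_ne_zero' _) this
    have h3 := T_inj' h2.2
    exact Or.inr (Or.inr ⟨h2.1, hb, by omega⟩)
  · rw [subX_X_ne i _ ha, subX_X_ne i _ hb] at h0
    have : (MvPolynomial.C (T c) * X a : WalkRing d) = MvPolynomial.C (T c') * X b :=
      sub_eq_zero.mp h0
    have h2 := CX_eq_CX (T_ne_zero' _) this
    exact Or.inl ⟨h2.1, T_inj' h2.2⟩

/-- Extraction in the degenerate case `i = j`. -/
lemma extract_diag {a b i : Fin d} {c c' x : ℤ}
    (hdvd : (X i - MvPolynomial.C (T (-2 * x)) * X i)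
      ∣ ((MvPolynomial.C (T c) * X a - MvPolynomial.C (T c') * X b : WalkRing d))) :
    (a = b ∧ c = c') ∨ (a = i ∧ b = i ∧ x ≠ 0 ∧ (-2 * x) ∣ (c - c')) := by
  set e : ℤ := -2 * x with he
  by_cases hx : x = 0
  · have : (X i - MvPolynomial.C (T e) * X i : WalkRing d) = 0 := by
      rw [he, hx]; norm_num
    rw [this, zero_dvd_iff, sub_eq_zero] at hdvd
    have h2 := CX_eq_CX (T_ne_zero' _) hdvd
    exact Or.inl ⟨h2.1, T_inj' h2.2⟩
  obtain ⟨g, hg⟩ := hdvd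
  have hψfac : subX i 0 (X i - MvPolynomial.C (T e) * X i) = 0 := by
    rw [map_sub, map_mul, subX_X_self, subX_C, mul_zero, sub_self]
  have h0 : subX i 0 (MvPolynomial.C (T c) * X a - MvPolynomial.C (T c') * X b) = 0 := by
    rw [hg, map_mul, hψfac, zero_mul]
  rw [map_sub, map_mul, map_mul, subX_C, subX_C] at h0
  by_cases ha : a = i <;> by_cases hb : b = i
  · rw [ha, hb] at hg
    right
    refine ⟨ha, hb, hx, ?_⟩
    have hfac : (X i - MvPolynomial.C (T e) * X i : WalkRing d)
        = MvPolynomial.C (1 - T e) * X i := by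
      rw [map_sub, map_one, sub_mul, one_mul]
    rw [hfac, mul_assoc, mul_comm (X i) g, ← mul_assoc] at hg
    have hco := congrArg (MvPolynomial.coeff (Finsupp.single i 1)) hg
    have hL : MvPolynomial.coeff (Finsupp.single i 1)
        (MvPolynomial.C (T c) * X i - MvPolynomial.C (T c') * X i : WalkRing d)
        = T c - T c' := by
      simp [MvPolynomial.C_mul_X_eq_monomial, MvPolynomial.coeff_monomial]
    have hR : MvPolynomial.coeff (Finsupp.single i 1)
        (MvPolynomial.C (1 - T e) * g * X i : WalkRing d)
        = (1 - T e) * MvPolynomial.coeff 0 g := by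
      rw [← zero_add (Finsupp.single i 1), MvPolynomial.coeff_mul_X, MvPolynomial.coeff_C_mul]
    rw [hL, hR] at hco
    exact T_sub_dvd ⟨_, hco⟩
  · rw [ha, subX_X_self, subX_X_ne i _ hb, mul_zero, zero_sub, neg_eq_zero] at h0
    exact absurd h0 (CX_ne_zero (T_ne_zero' _))
  · rw [hb, subX_X_self, subX_X_ne i _ ha, mul_zero, sub_zero] at h0
    exact absurd h0 (CX_ne_zero (T_ne_zero' _))
  · rw [subX_X_ne i _ ha, subX_X_ne i _ hb] at h0
    have h2 := CX_eq_CX (T_ne_zero' _) (sub_eq_zero.mp h0)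
    exact Or.inl ⟨h2.1, T_inj' h2.2⟩

/-! ### Loop hyperplanes -/

lemma hyp_loop {S : Set (Fin d × Fin d × ℤ)} {i : Fin d} {x : ℤ} (h : HypCl S i i x) :
    ∀ k : ℤ, k ≠ 0 → HypCl S i i (k * x) := by
  have hpos : ∀ m : ℕ, HypCl S i i (((m : ℤ) + 1) * x) := by
    intro m
    induction m with
    | zero => simpa using h
    | succ p ih =>
      have h2 := ih.comp h
      have h3 : ((p : ℤ) + 1) * x + x = (((p + 1 : ℕ) : ℤ) + 1) * x := by push_cast; ring
      rwa [h3] at h2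
  have hposZ : ∀ k : ℤ, 0 < k → HypCl S i i (k * x) := by
    intro k hk
    have h2 := hpos (k - 1).toNat
    have h3 : (((k - 1).toNat : ℤ) + 1) = k := by omega
    rwa [h3] at h2
  intro k hk
  rcases lt_or_gt_of_ne hk with hneg | hposk
  · have h2 := (hposZ (-k) (by omega)).symm
    have h3 : -(-k * x) = k * x := by ring
    rwa [h3] at h2
  · exact hposZ k hposk

/-! ### Bridges between `ERel` and the divisibility condition -/

lemma dvd_ERel {S : Set (Fin d × Fin d × ℤ)} {w w' : Fin n → Fin d} (t : Fin n)
    (h : lamWalk w t - lamWalk w' t = 0 ∨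
      ∃ (i j : Fin d) (x : ℤ), HypCl S i j x ∧
        (X i - MvPolynomial.C (T (-2 * x)) * X j) ∣ (lamWalk w t - lamWalk w' t)) :
    ERel S w w' t := by
  rw [lamWalk_eq, lamWalk_eq] at h
  rcases h with h0 | ⟨i, j, x, hH, hdvd⟩
  · have h2 := CX_eq_CX (T_ne_zero' _) (sub_eq_zero.mp h0)
    exact Or.inl ⟨h2.1, T_inj' h2.2⟩
  · by_cases hij : i = j
    · rw [hij] at hdvd
      rcases extract_diag hdvd with ⟨hab, hcc⟩ | ⟨ha, hb, hx0, hdv⟩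
      · exact Or.inl ⟨hab, hcc⟩
      · obtain ⟨k, hk⟩ := hdv
        by_cases hk0 : k = 0
        · rw [hk0, mul_zero] at hk
          exact Or.inl ⟨ha.trans hb.symm, by omega⟩
        · refine Or.inr ⟨-k * x, ?_, by rw [hk]; ring⟩
          rw [ha, hb, ← hij]
          exact hyp_loop (hij ▸ hH) (-k) (by omega)
    · rcases extract hij hdvd with ⟨hab, hcc⟩ | ⟨ha, hb, hcc⟩ | ⟨ha, hb, hcc⟩
      · exact Or.inl ⟨hab, hcc⟩
      · exact Or.inr ⟨x, by rw [ha, hb]; exact hH, by omega⟩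
      · exact Or.inr ⟨-x, by rw [ha, hb]; exact hH.symm, by omega⟩

lemma ERel_dvd {S : Set (Fin d × Fin d × ℤ)} {w w' : Fin n → Fin d} (t : Fin n)
    (h : ERel S w w' t) :
    lamWalk w t - lamWalk w' t = 0 ∨
      ∃ (i j : Fin d) (x : ℤ), HypCl S i j x ∧
        (X i - MvPolynomial.C (T (-2 * x)) * X j) ∣ (lamWalk w t - lamWalk w' t) := by
  rcases h with ⟨h1, h2⟩ | ⟨x, hx, he⟩
  · left
    rw [lamWalk_eq, lamWalk_eq, h1, h2, sub_self]
  · right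
    refine ⟨w t, w' t, x, hx, MvPolynomial.C (T (cexp w t)), ?_⟩
    rw [lamWalk_eq, lamWalk_eq]
    have h3 : cexp w' t = cexp w t + (-2 * x) := by omega
    rw [h3, T_add, map_mul]
    ring

/-! ### The forward direction -/

lemma eqvGen_ERel {S : Set (Fin d × Fin d × ℤ)} {w w' : Fin n → Fin d}
    (h : Relation.EqvGen (stepRefl S) w w') (t : Fin n) : ERel S w w' t := by
  induction h with
  | rel a b hab => exact stepRefl_ERel hab t
  | refl a => exact ERel.refl S a t
  | symm a b _ ih => exact ih.symm'
  | trans a b c _ _ ih1 ih2 => exact ih1.trans' ih2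

/-! ### The backward direction -/

lemma back {S : Set (Fin d × Fin d × ℤ)} (w' : Fin n → Fin d) :
    ∀ k : ℕ, ∀ w : Fin n → Fin d, (∀ s : Fin n, (s : ℕ) < n - k → w s = w' s) →
      (∀ t, ERel S w w' t) → Relation.EqvGen (stepRefl S) w w' := by
  intro k
  induction k with
  | zero =>
    intro w hpre _
    have hwe : w = w' := funext fun s => hpre s (by omega)
    rw [hwe]
    exact Relation.EqvGen.refl w'
  | succ k ih =>
    intro w hpre hE
    by_cases hkn : n ≤ k
    · exact ih w (fun s hs => hpre s (by omega)) hE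
    push_neg at hkn
    set t0 : ℕ := n - (k + 1) with ht0
    have ht0n : t0 < n := by omega
    set tf : Fin n := ⟨t0, ht0n⟩ with htf
    by_cases heq : w tf = w' tf
    · refine ih w ?_ hE
      intro s hs
      by_cases hlt : (s : ℕ) < t0
      · exact hpre s (by omega)
      · have hs0 : (s : ℕ) = t0 := by omega
        have hsf : s = tf := Fin.ext hs0
        rw [hsf]; exact heq
    · rcases hE tf with ⟨h1, _⟩ | ⟨x, hx, hce⟩
      · exact absurd h1 heq
      -- touching condition at t0
      have hcnt : ∀ a, wcount w' t0 a = wcount w t0 a :=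
        fun a => wcount_congr t0 (fun s hs => (hpre s (by omega)).symm) a
      have hc1 : cexp w tf = 2 * ((wcount w t0 (w tf) : ℤ) + 1 - 1) := by
        unfold cexp
        rw [show ((tf : ℕ)) = t0 from rfl, wcount_succ w t0 ht0n (w tf), if_pos rfl]
        push_cast; ring
      have hc2 : cexp w' tf = 2 * ((wcount w t0 (w' tf) : ℤ) + 1 - 1) := by
        unfold cexp
        rw [show ((tf : ℕ)) = t0 from rfl, wcount_succ w' t0 ht0n (w' tf), if_pos rfl, hcnt]
        push_cast; ring
      have htouch : (wcount w t0 (w tf) : ℤ) - (wcount w t0 (w' tf) : ℤ) = x := by omega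
      set w'' : Fin n → Fin d :=
        fun s => if t0 ≤ (s : ℕ) then Equiv.swap (w tf) (w' tf) (w s) else w s with hw''
      have hstep : stepRefl S w w'' :=
        ⟨w tf, w' tf, x, t0, hx, htouch, fun s => rfl⟩
      have hE'' : ∀ t, ERel S w'' w' t :=
        fun t => ((stepRefl_ERel hstep t).symm').trans' (hE t)
      have hpre'' : ∀ s : Fin n, (s : ℕ) < n - k → w'' s = w' s := by
        intro s hs
        by_cases hlt : (s : ℕ) < t0
        · show (if t0 ≤ (s : ℕ) then Equiv.swap (w tf) (w' tf) (w s) else w s) = w' s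
          rw [if_neg (by omega)]
          exact hpre s (by omega)
        · have hs0 : (s : ℕ) = t0 := by omega
          have hsf : s = tf := Fin.ext hs0
          show (if t0 ≤ (s : ℕ) then Equiv.swap (w tf) (w' tf) (w s) else w s) = w' s
          rw [if_pos (by omega), hsf, Equiv.swap_apply_left]
      exact Relation.EqvGen.trans _ _ _ (Relation.EqvGen.rel _ _ hstep) (ih w'' hpre'' hE'')

end W15

/-- two walks `w`, `w'` (on hyperplanes `(i,j;x)` with i ≠ j and
x ≠ 0) are in the same walk orbit of the group generated by `S` iff every
non-zero entry of λ^w - λ^{w'} is divisible by a factor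
`λ_i - q^{-2x} λ_j` with `(i,j;x)` a reflection of the group. -/
theorem walk_orbit_iff_divisible {n d : ℕ} (S : Set (Fin d × Fin d × ℤ))
    (hS : ∀ p ∈ S, p.1 ≠ p.2.1 ∧ p.2.2 ≠ 0)
    (w w' : Fin n → Fin d) :
    Relation.EqvGen (stepRefl S) w w' ↔
      ∀ t : Fin n,
        lamWalk w t - lamWalk w' t = 0 ∨
        ∃ (i j : Fin d) (x : ℤ),
          HypCl S i j x ∧
          (X i - MvPolynomial.C (LaurentPolynomial.T (-2 * x)) * X j) ∣
            (lamWalk w t - lamWalk w' t) := by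
  constructor
  · intro h t
    exact W15.ERel_dvd t (W15.eqvGen_ERel h t)
  · intro h
    exact W15.back w' n w (fun s hs => absurd hs (by omega)) (fun t => W15.dvd_ERel t (h t))

end
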